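/- If P is an even polynomial with P(x_m) = x_m at the largest node x_m > 0 and P interpolates with tangency conditions P(x_j) = x_j, P'(x_j) = 1 at interior nodes 0 < x_0 < ... < x_{m-1} < x_m, with P of degree 4m (even number of remaining conditions), then P(x) ≥ |x| for all x in [-x_m, x_m]. -/

import Mathlib

open Polynomial Finset Filter

lemma sum_even_vanish (f : ℕ → ℝ) (hf : ∀ i, Odd i → f i = 0) :
    ∀ n, ∑ i ∈ Finset.range (2 * n), f i = ∑ i ∈ Finset.range n, f (2 * i) := by
  intro n
  induction n with
  | zero => simp
  | succ n ih =>
    have h : 2 * (n + 1) = (2 * n) + 1 + 1 := by ring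
    rw [h, Finset.sum_range_succ, Finset.sum_range_succ, Finset.sum_range_succ, ih,
      hf (2 * n + 1) ⟨n, by ring⟩]
    ring

lemma iterate_derivative_of_natDegree_le :
    ∀ (n : ℕ) (w : ℝ[X]), w.natDegree ≤ n →
      Polynomial.derivative^[n] w = C ((n.factorial : ℝ) * w.coeff n) := by
  intro n
  induction n with
  | zero => intro w hw; simpa using (Polynomial.eq_C_of_natDegree_le_zero hw)
  | succ n ih =>
    intro w hw
    rw [Function.iterate_succ_apply,
      ih _ (le_trans (Polynomial.natDegree_derivative_le w) (by omega)),
      Polynomial.coeff_derivative]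
    congr 1
    push_cast [Nat.factorial_succ]
    ring

lemma cs_prod_pos (m : ℕ) : 0 < ∏ i ∈ Finset.range (2 * m + 1), ((1:ℝ)/2 - i) := by
  induction m with
  | zero => norm_num
  | succ m ih =>
    have h : 2 * (m + 1) + 1 = (2 * m + 1) + 1 + 1 := by ring
    rw [h, Finset.prod_range_succ, Finset.prod_range_succ, mul_assoc]
    refine mul_pos ih (mul_pos_of_neg_of_neg ?_ ?_)
    · push_cast; linarith [Nat.cast_nonneg (α := ℝ) m]
    · push_cast; linarith [Nat.cast_nonneg (α := ℝ) m]

lemma rolle_interleave (f f' : ℝ → ℝ)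
    (hd : ∀ t : ℝ, 0 < t → HasDerivAt f (f' t) t) :
    ∀ (k : ℕ) (s : Finset ℝ), s.card = k + 1 → (∀ t ∈ s, 0 < t) → (∀ t ∈ s, f t = 0) →
    ∃ s' : Finset ℝ, s'.card = k ∧ (∀ u ∈ s', 0 < u) ∧ (∀ u ∈ s', f' u = 0) ∧
      (∀ u ∈ s', u ∉ s) ∧ (∀ u ∈ s', ∃ a ∈ s, a < u) := by
  intro k
  induction k with
  | zero => intro s _ _ _; exact ⟨∅, by simp⟩
  | succ k ih =>
    intro s hcard hpos hzero
    have hne : s.Nonempty := by rw [← Finset.card_pos, hcard]; omega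
    set a := s.min' hne with ha
    have has : a ∈ s := s.min'_mem hne
    have hcard₁ : (s.erase a).card = k + 1 := by
      rw [Finset.card_erase_of_mem has, hcard]; omega
    have hne₁ : (s.erase a).Nonempty := by rw [← Finset.card_pos, hcard₁]; omega
    set b := (s.erase a).min' hne₁ with hb
    have hbs₁ : b ∈ s.erase a := (s.erase a).min'_mem hne₁
    have hbs : b ∈ s := Finset.mem_of_mem_erase hbs₁
    have hab : a < b := lt_of_le_of_ne (s.min'_le b hbs) (Ne.symm (Finset.ne_of_mem_erase hbs₁))
    have hapos : 0 < a := hpos a has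
    obtain ⟨ξ, hξmem, hξzero⟩ := exists_hasDerivAt_eq_zero hab
      (fun t ht => ((hd t (lt_of_lt_of_le hapos ht.1)).continuousAt).continuousWithinAt)
      (by rw [hzero a has, hzero b hbs])
      (fun t ht => hd t (lt_trans hapos ht.1))
    obtain ⟨s'', hc'', hpos'', hz'', hnotin'', hlb''⟩ := ih (s.erase a) hcard₁
      (fun t ht => hpos t (Finset.mem_of_mem_erase ht))
      (fun t ht => hzero t (Finset.mem_of_mem_erase ht))
    have hgtb : ∀ u ∈ s'', b < u := by
      intro u hu
      obtain ⟨a', ha', hlt⟩ := hlb'' u hu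
      exact lt_of_le_of_lt ((s.erase a).min'_le a' ha') hlt
    have hξnot : ξ ∉ s'' := fun h => absurd (hgtb ξ h) (not_lt.mpr hξmem.2.le)
    refine ⟨insert ξ s'', ?_, ?_, ?_, ?_, ?_⟩
    · rw [Finset.card_insert_of_notMem hξnot, hc'']
    · intro u hu
      rcases Finset.mem_insert.mp hu with h | h
      · exact h ▸ lt_trans hapos hξmem.1
      · exact hpos'' u h
    · intro u hu
      rcases Finset.mem_insert.mp hu with h | h
      · exact h ▸ hξzero
      · exact hz'' u h
    · intro u hu hus
      rcases Finset.mem_insert.mp hu with h | h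
      · subst h
        have : u ∈ s.erase a := Finset.mem_erase.mpr ⟨ne_of_gt hξmem.1, hus⟩
        exact absurd ((s.erase a).min'_le u this) (not_le.mpr hξmem.2)
      · have hub : b < u := hgtb u h
        have : u ∈ s.erase a := Finset.mem_erase.mpr ⟨ne_of_gt (lt_trans hab hub), hus⟩
        exact hnotin'' u h this
    · intro u hu
      rcases Finset.mem_insert.mp hu with h | h
      · exact ⟨a, has, h ▸ hξmem.1⟩
      · obtain ⟨a', ha', hlt⟩ := hlb'' u h
        exact ⟨a', Finset.mem_of_mem_erase ha', hlt⟩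

lemma rolle_chain (F : ℕ → ℝ → ℝ)
    (hd : ∀ n, ∀ t : ℝ, 0 < t → HasDerivAt (F n) (F (n+1) t) t) :
    ∀ (k n : ℕ) (s : Finset ℝ), s.card = k + 1 → (∀ t ∈ s, 0 < t) → (∀ t ∈ s, F n t = 0) →
    ∃ ξ : ℝ, 0 < ξ ∧ F (n + k) ξ = 0 := by
  intro k
  induction k with
  | zero =>
    intro n s hcard hpos hzero
    have hne : s.Nonempty := by rw [← Finset.card_pos, hcard]; omega
    obtain ⟨t, ht⟩ := hne
    exact ⟨t, hpos t ht, by simpa using hzero t ht⟩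
  | succ k ih =>
    intro n s hcard hpos hzero
    obtain ⟨s', hc', hpos', hz', _, _⟩ :=
      rolle_interleave (F n) (F (n+1)) (hd n) (k + 1) s hcard hpos hzero
    obtain ⟨ξ, hξpos, hξ⟩ := ih (n+1) s' hc' hpos' hz'
    exact ⟨ξ, hξpos, by rwa [show n + 1 + k = n + (k+1) by ring] at hξ⟩

theorem even_interpolation_one_sided (m : ℕ) (x : Fin (m + 1) → ℝ)
    (hpos : 0 < x 0) (hmono : StrictMono x) (P : Polynomial ℝ)
    (hdeg : P.natDegree ≤ 4 * m) (heven : ∀ i, Odd i → P.coeff i = 0)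
    (htang : ∀ j : Fin (m + 1), (j : ℕ) < m →
      P.eval (x j) = x j ∧ P.derivative.eval (x j) = 1)
    (hlast : P.eval (x (Fin.last m)) = x (Fin.last m)) :
    ∀ y ∈ Set.Icc (-(x (Fin.last m))) (x (Fin.last m)), |y| ≤ P.eval y := by
  have hxpos : ∀ j : Fin (m+1), 0 < x j :=
    fun j => lt_of_lt_of_le hpos (hmono.monotone (Fin.zero_le j))
  set T : Fin (m+1) → ℝ := fun j => x j ^ 2 with hT
  have hTpos : ∀ j, 0 < T j := fun j => pow_pos (hxpos j) 2
  have hTmono : StrictMono T := fun i j hij =>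
    pow_lt_pow_left₀ (hmono hij) (le_of_lt (hxpos i)) (by norm_num)
  have hsqrtT : ∀ j, Real.sqrt (T j) = x j := fun j => Real.sqrt_sq (hxpos j).le
  set p : ℝ[X] := ∑ i ∈ Finset.range (2*m+1), C (P.coeff (2*i)) * X ^ i with hp
  have hpdeg : p.natDegree ≤ 2*m := by
    apply Polynomial.natDegree_sum_le_of_forall_le
    intro i hi
    calc (C (P.coeff (2*i)) * X ^ i).natDegree ≤ (X ^ i : ℝ[X]).natDegree :=
          Polynomial.natDegree_C_mul_le _ _
      _ = i := Polynomial.natDegree_X_pow i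
      _ ≤ 2*m := Nat.lt_succ_iff.mp (Finset.mem_range.mp hi)
  have hPp : ∀ y : ℝ, P.eval y = p.eval (y^2) := by
    intro y
    have h1 : P.eval y = ∑ i ∈ Finset.range (2*(2*m+1)), P.coeff i * y ^ i :=
      Polynomial.eval_eq_sum_range' (by omega) y
    rw [h1, sum_even_vanish (fun i => P.coeff i * y^i)
      (fun i hi => by show P.coeff i * y^i = 0; rw [heven i hi]; ring) (2*m+1), hp]
    simp only [Polynomial.eval_finset_sum, Polynomial.eval_mul, Polynomial.eval_C,
      Polynomial.eval_pow, Polynomial.eval_X]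
    exact Finset.sum_congr rfl (fun i _ => by rw [pow_mul])
  have hcomp : P = p.comp (X ^ 2) :=
    Polynomial.funext (fun r => by
      rw [Polynomial.eval_comp, Polynomial.eval_pow, Polynomial.eval_X]; exact hPp r)
  have hder : ∀ y : ℝ, P.derivative.eval y = 2 * y * p.derivative.eval (y^2) := by
    intro y
    conv_lhs => rw [hcomp]
    rw [Polynomial.derivative_comp]
    simp [Polynomial.eval_comp]
    norm_num
  have hpT : ∀ j : Fin m, p.eval (T j.castSucc) = x j.castSucc := by
    intro j
    have := (htang j.castSucc (by simp)).1
    rw [hPp] at this; exact this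
  have hp'T : ∀ j : Fin m, p.derivative.eval (T j.castSucc) = 1/(2 * x j.castSucc) := by
    intro j
    have h1 := (htang j.castSucc (by simp)).2
    rw [hder] at h1
    have hx0 : x j.castSucc ≠ 0 := ne_of_gt (hxpos _)
    field_simp at h1 ⊢
    linarith
  have hplast : p.eval (T (Fin.last m)) = x (Fin.last m) := by
    rw [hPp] at hlast; exact hlast
  have claimT : ∀ c : ℝ, 0 < c → c ≤ T (Fin.last m) → Real.sqrt c ≤ p.eval c := by
    intro c hc0 hcle
    by_contra hcon
    push_neg at hcon
    have hcne : ∀ j : Fin m, c ≠ T j.castSucc := by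
      intro j h
      rw [h, hpT j, ← hsqrtT j.castSucc] at hcon
      exact lt_irrefl _ hcon
    have hcnelast : c ≠ T (Fin.last m) := by
      intro h
      rw [h, hplast, ← hsqrtT (Fin.last m)] at hcon
      exact lt_irrefl _ hcon
    have hclt : c < T (Fin.last m) := lt_of_le_of_ne hcle hcnelast
    classical
    set w : ℝ[X] := (X - C (T (Fin.last m))) * ∏ j : Fin m, (X - C (T j.castSucc)) ^ 2 with hw
    have hwmono2 : (∏ j : Fin m, (X - C (T j.castSucc)) ^ 2 : ℝ[X]).Monic :=
      monic_prod_of_monic _ _ (fun j _ => (monic_X_sub_C _).pow 2)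
    have hwmonic : w.Monic := (monic_X_sub_C _).mul hwmono2
    have hwdeg : w.natDegree = 2*m+1 := by
      rw [hw, Polynomial.Monic.natDegree_mul (monic_X_sub_C _) hwmono2,
        Polynomial.natDegree_prod _ _ (fun j _ => pow_ne_zero 2 (X_sub_C_ne_zero _))]
      simp [Polynomial.natDegree_pow, Polynomial.natDegree_X_sub_C]
      omega
    have hwevalc : w.eval c < 0 := by
      rw [hw]
      simp only [Polynomial.eval_mul, Polynomial.eval_prod, Polynomial.eval_pow,
        Polynomial.eval_sub, Polynomial.eval_X, Polynomial.eval_C]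
      apply mul_neg_of_neg_of_pos
      · linarith
      · exact Finset.prod_pos (fun j _ => pow_two_pos_of_ne_zero (sub_ne_zero.mpr (hcne j)))
    set K : ℝ := (p.eval c - Real.sqrt c) / w.eval c with hKdef
    have hKpos : 0 < K := div_pos_of_neg_of_neg (by linarith) hwevalc
    have hKw : K * w.eval c = p.eval c - Real.sqrt c := by
      rw [hKdef, div_mul_cancel₀ _ (ne_of_lt hwevalc)]
    set q : ℝ[X] := p - C K * w with hq
    have hwT : ∀ j : Fin m, w.eval (T j.castSucc) = 0 := by
      intro j; rw [hw]
      simp only [Polynomial.eval_mul, Polynomial.eval_prod, Polynomial.eval_pow,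
        Polynomial.eval_sub, Polynomial.eval_X, Polynomial.eval_C]
      exact mul_eq_zero_of_right _ (Finset.prod_eq_zero (Finset.mem_univ j) (by simp))
    have hwlast : w.eval (T (Fin.last m)) = 0 := by rw [hw]; simp
    have hw'T : ∀ j : Fin m, w.derivative.eval (T j.castSucc) = 0 := by
      intro j
      have hfac : w = (X - C (T j.castSucc))^2 *
          ((X - C (T (Fin.last m))) * ∏ i ∈ Finset.univ.erase j, (X - C (T i.castSucc)) ^ 2) := by
        rw [hw, ← Finset.mul_prod_erase Finset.univ _ (Finset.mem_univ j)]
        ring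
      rw [hfac, Polynomial.derivative_mul]
      simp [Polynomial.derivative_pow]
    set cs : ℕ → ℝ := fun n => ∏ i ∈ Finset.range n, ((1:ℝ)/2 - i) with hcs
    set F : ℕ → ℝ → ℝ :=
      fun n t => (Polynomial.derivative^[n] q).eval t - cs n * t ^ ((1:ℝ)/2 - n) with hF
    have hdF : ∀ n, ∀ t : ℝ, 0 < t → HasDerivAt (F n) (F (n+1) t) t := by
      intro n t ht
      have h1 : HasDerivAt (fun s => (Polynomial.derivative^[n] q).eval s)
          ((Polynomial.derivative^[n+1] q).eval t) t := by
        have h := Polynomial.hasDerivAt (Polynomial.derivative^[n] q) t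
        rwa [← Function.iterate_succ_apply' Polynomial.derivative n q] at h
      have h2 : HasDerivAt (fun s : ℝ => s ^ ((1:ℝ)/2 - n))
          (((1:ℝ)/2 - n) * t ^ ((1:ℝ)/2 - n - 1)) t :=
        Real.hasDerivAt_rpow_const (Or.inl (ne_of_gt ht))
      have h3 := h1.sub (h2.const_mul (cs n))
      convert h3 using 1
      rfl
      rfl
      rfl
      have e1 : cs (n+1) = cs n * ((1:ℝ)/2 - n) := by
        simp only [hcs]; rw [Finset.prod_range_succ]
      have e2 : ((1:ℝ)/2 - ((n:ℕ)+1:ℕ)) = ((1:ℝ)/2 - n - 1) := by push_cast; ring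
      simp only [hF, e1, e2]
      ring
    have hF0c : F 0 c = 0 := by
      simp only [hF, hcs]
      rw [Function.iterate_zero_apply, hq]
      simp only [Polynomial.eval_sub, Polynomial.eval_mul, Polynomial.eval_C]
      rw [hKw]
      norm_num
      rw [← Real.sqrt_eq_rpow]
      ring
    have hF0T : ∀ j : Fin m, F 0 (T j.castSucc) = 0 := by
      intro j
      simp only [hF, hcs]
      rw [Function.iterate_zero_apply, hq]
      simp only [Polynomial.eval_sub, Polynomial.eval_mul, Polynomial.eval_C]
      rw [hwT j, hpT j]
      norm_num
      rw [← Real.sqrt_eq_rpow, hsqrtT]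
      ring
    have hF0last : F 0 (T (Fin.last m)) = 0 := by
      simp only [hF, hcs]
      rw [Function.iterate_zero_apply, hq]
      simp only [Polynomial.eval_sub, Polynomial.eval_mul, Polynomial.eval_C]
      rw [hwlast, hplast]
      norm_num
      rw [← Real.sqrt_eq_rpow, hsqrtT]
      ring
    have hF1T : ∀ j : Fin m, F 1 (T j.castSucc) = 0 := by
      intro j
      have hxj := hxpos j.castSucc
      simp only [hF, hcs]
      rw [Function.iterate_one, hq, Polynomial.derivative_sub, Polynomial.derivative_C_mul]
      simp only [Polynomial.eval_sub, Polynomial.eval_mul, Polynomial.eval_C]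
      rw [hw'T j, hp'T j]
      have e3 : ((1:ℝ)/2 - ((1:ℕ):ℝ)) = -(1/2 : ℝ) := by norm_num
      have e4 : (T j.castSucc) ^ (-(1/2:ℝ)) = (x j.castSucc)⁻¹ := by
        rw [Real.rpow_neg (hTpos j.castSucc).le, ← Real.sqrt_eq_rpow, hsqrtT]
      rw [e3, e4]
      simp [Finset.prod_range_one]
      field_simp
      ring
    have hq21 : Polynomial.derivative^[2*m+1] q = C (-(K * ((2*m+1).factorial : ℝ))) := by
      rw [hq, Polynomial.iterate_derivative_sub, Polynomial.iterate_derivative_C_mul,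
        iterate_derivative_of_natDegree_le (2*m+1) p (by omega),
        iterate_derivative_of_natDegree_le (2*m+1) w (le_of_eq hwdeg),
        Polynomial.coeff_eq_zero_of_natDegree_lt (lt_of_le_of_lt hpdeg (by omega))]
      have hcw : w.coeff (2*m+1) = 1 := by
        rw [← hwdeg, Polynomial.coeff_natDegree]; exact hwmonic
      rw [hcw, ← Polynomial.C_mul]
      simp
    have hFneg : ∀ t : ℝ, 0 < t → F (2*m+1) t < 0 := by
      intro t ht
      simp only [hF]
      rw [hq21, Polynomial.eval_C]
      have h1 : 0 < cs (2*m+1) := by simp only [hcs]; exact cs_prod_pos m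
      have h2 : 0 < t ^ ((1:ℝ)/2 - ((2*m+1:ℕ):ℝ)) := Real.rpow_pos_of_pos ht _
      have h3 : 0 < (((2*m+1).factorial : ℝ)) := by positivity
      nlinarith [mul_pos h1 h2, mul_pos hKpos h3]
    set D : Finset ℝ := Finset.image (fun j : Fin m => T j.castSucc) Finset.univ with hD
    have hinj : Function.Injective (fun j : Fin m => T j.castSucc) := by
      intro a b hab
      by_contra hne
      rcases lt_or_gt_of_ne hne with h | h
      · exact absurd hab (ne_of_lt (hTmono (Fin.castSucc_lt_castSucc_iff.mpr h)))
      · exact absurd hab.symm (ne_of_lt (hTmono (Fin.castSucc_lt_castSucc_iff.mpr h)))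
    have hDcard : D.card = m := by
      rw [hD, Finset.card_image_of_injective _ hinj, Finset.card_univ, Fintype.card_fin]
    set s₀ : Finset ℝ := insert c (insert (T (Fin.last m)) D) with hs₀
    have hlastD : T (Fin.last m) ∉ D := by
      simp only [hD, Finset.mem_image]
      rintro ⟨j, -, hj⟩
      exact absurd hj (ne_of_lt (hTmono (Fin.castSucc_lt_last j)))
    have hcins : c ∉ insert (T (Fin.last m)) D := by
      simp only [Finset.mem_insert, hD, Finset.mem_image]
      push_neg
      exact ⟨hcnelast, fun j _ h => (hcne j) h.symm⟩
    have hs₀card : s₀.card = (m+1) + 1 := by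
      rw [hs₀, Finset.card_insert_of_notMem hcins, Finset.card_insert_of_notMem hlastD, hDcard]
    have hs₀pos : ∀ t ∈ s₀, 0 < t := by
      intro t ht
      rw [hs₀] at ht
      rcases Finset.mem_insert.mp ht with h | h
      · exact h ▸ hc0
      rcases Finset.mem_insert.mp h with h | h
      · exact h ▸ hTpos _
      · obtain ⟨j, -, hj⟩ := Finset.mem_image.mp h
        exact hj ▸ hTpos _
    have hs₀zero : ∀ t ∈ s₀, F 0 t = 0 := by
      intro t ht
      rw [hs₀] at ht
      rcases Finset.mem_insert.mp ht with h | h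
      · exact h ▸ hF0c
      rcases Finset.mem_insert.mp h with h | h
      · exact h ▸ hF0last
      · obtain ⟨j, -, hj⟩ := Finset.mem_image.mp h
        exact hj ▸ hF0T j
    obtain ⟨s', hs'card, hs'pos, hs'zero, hs'notin, -⟩ :=
      rolle_interleave (F 0) (F 1) (hdF 0) (m+1) s₀ hs₀card hs₀pos hs₀zero
    have hdisj : Disjoint s' D := Finset.disjoint_left.mpr (fun u hu hD' =>
      hs'notin u hu (by rw [hs₀]; exact Finset.mem_insert_of_mem (Finset.mem_insert_of_mem hD')))
    obtain ⟨ξ, hξpos, hξzero⟩ := rolle_chain F hdF (2*m) 1 (s' ∪ D)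
      (by rw [Finset.card_union_of_disjoint hdisj, hs'card, hDcard]; ring)
      (by
        intro t ht
        rcases Finset.mem_union.mp ht with h | h
        · exact hs'pos t h
        · obtain ⟨j, -, hj⟩ := Finset.mem_image.mp (hD ▸ h)
          exact hj ▸ hTpos _)
      (by
        intro t ht
        rcases Finset.mem_union.mp ht with h | h
        · exact hs'zero t h
        · obtain ⟨j, -, hj⟩ := Finset.mem_image.mp (hD ▸ h)
          exact hj ▸ hF1T j)
    rw [show 1 + 2*m = 2*m+1 by ring] at hξzero
    exact absurd hξzero (ne_of_lt (hFneg ξ hξpos))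
  intro y hy
  rw [Set.mem_Icc] at hy
  have habs : |y| ≤ x (Fin.last m) := abs_le.mpr ⟨hy.1, hy.2⟩
  have hPy : P.eval y = p.eval (|y|^2) := by rw [hPp y, sq_abs]
  rcases eq_or_lt_of_le (abs_nonneg y) with h0 | h0
  · have hy0 : y = 0 := abs_eq_zero.mp h0.symm
    subst hy0
    simp only [abs_zero]
    rw [hPp 0]
    norm_num
    have hTl : 0 < T (Fin.last m) := hTpos _
    have htends : Tendsto (fun t : ℝ => p.eval t) (nhdsWithin 0 (Set.Ioi 0)) (nhds (p.eval 0)) :=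
      ((Polynomial.continuous p).continuousAt).continuousWithinAt
    have hev : ∀ᶠ t in nhdsWithin (0:ℝ) (Set.Ioi 0), 0 ≤ p.eval t := by
      filter_upwards [eventually_mem_nhdsWithin,
        eventually_nhdsWithin_of_eventually_nhds (eventually_lt_nhds hTl)] with t ht1 ht2
      exact le_trans (Real.sqrt_nonneg t) (claimT t ht1 ht2.le)
    exact ge_of_tendsto htends hev
  · have h1 : |y|^2 ≤ T (Fin.last m) := pow_le_pow_left₀ (abs_nonneg y) habs 2
    have h2 := claimT (|y|^2) (pow_pos h0 2) h1
    rw [Real.sqrt_sq (abs_nonneg y)] at h2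
    rw [hPy]
    exact h2
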